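/- Let X₀ and X₁ be Banach lattices of measurable functions on a common measure space (Ω,Σ,μ) and let 1 < p < ∞. For a measurable function f : Ω → ℝ, one has f ∈ X₀^(p)+X₁^(p) if and only if |f|^p ∈ X₀+X₁. -/

import Mathlib

open MeasureTheory

/-- A Banach lattice of (a.e.-equivalence classes of) real-valued measurable
functions on a measure space `(Ω, μ)`: a linear subspace of `Ω →ₘ[μ] ℝ` with a complete
norm satisfying the lattice (ideal) property. -/
structure BanachFunctionLattice (Ω : Type*) [MeasurableSpace Ω] (μ : MeasureTheory.Measure Ω) where
  carrier : Set (Ω →ₘ[μ] ℝ)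
  norm : (Ω →ₘ[μ] ℝ) → ℝ
  zero_mem : 0 ∈ carrier
  add_mem : ∀ {f g}, f ∈ carrier → g ∈ carrier → f + g ∈ carrier
  smul_mem : ∀ (c : ℝ) {f}, f ∈ carrier → c • f ∈ carrier
  norm_nonneg : ∀ f ∈ carrier, 0 ≤ norm f
  norm_eq_zero_iff : ∀ f ∈ carrier, (norm f = 0 ↔ f = 0)
  norm_add_le : ∀ f ∈ carrier, ∀ g ∈ carrier, norm (f + g) ≤ norm f + norm g
  norm_smul : ∀ (c : ℝ), ∀ f ∈ carrier, norm (c • f) = |c| * norm f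
  ideal_mem : ∀ f ∈ carrier, ∀ g : (Ω →ₘ[μ] ℝ), |g| ≤ |f| → g ∈ carrier
  ideal_norm_le : ∀ f ∈ carrier, ∀ g : (Ω →ₘ[μ] ℝ), |g| ≤ |f| → norm g ≤ norm f
  complete : ∀ u : ℕ → (Ω →ₘ[μ] ℝ), (∀ n, u n ∈ carrier) →
    (∀ ε > 0, ∃ N, ∀ m ≥ N, ∀ n ≥ N, norm (u m - u n) < ε) →
    ∃ f ∈ carrier, ∀ ε > 0, ∃ N, ∀ n ≥ N, norm (u n - f) < ε

variable {Ω : Type*} [MeasurableSpace Ω] {μ : MeasureTheory.Measure Ω}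

/-- The a.e.-equivalence class of `ω ↦ |f ω| ^ p` (real power). -/
noncomputable def absRpow (p : ℝ) (f : Ω →ₘ[μ] ℝ) : Ω →ₘ[μ] ℝ :=
  AEEqFun.mk (fun ω => |f ω| ^ p)
    (((by measurability : Measurable fun x : ℝ => |x| ^ p).comp_aemeasurable
      f.aemeasurable).aestronglyMeasurable)

/-- A (not necessarily complete) normed function space: the data of a carrier and a norm.
Used to speak about `p`-convexifications without re-proving all the axioms. -/
structure FunctionSpace (Ω : Type*) [MeasurableSpace Ω] (μ : MeasureTheory.Measure Ω) where
  carrier : Set (Ω →ₘ[μ] ℝ)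
  norm : (Ω →ₘ[μ] ℝ) → ℝ

/-- The carrier-and-norm data underlying a Banach function lattice. -/
def BanachFunctionLattice.toFunctionSpace (X : BanachFunctionLattice Ω μ) :
    FunctionSpace Ω μ := ⟨X.carrier, X.norm⟩

/-- The `p`-convexification `X^(p)`: all `f` with `|f|^p ∈ X`, with norm `‖|f|^p‖_X^(1/p)`. -/
noncomputable def pConv (X : BanachFunctionLattice Ω μ) (p : ℝ) : FunctionSpace Ω μ where
  carrier := {f | absRpow p f ∈ X.carrier}
  norm := fun f => (X.norm (absRpow p f)) ^ (1 / p)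

/-- The sum space `X₀ + X₁` (as a set). -/
def sumSet (A₀ A₁ : FunctionSpace Ω μ) : Set (Ω →ₘ[μ] ℝ) :=
  {f | ∃ a₀ ∈ A₀.carrier, ∃ a₁ ∈ A₁.carrier, f = a₀ + a₁}

/-- The Peetre `K`-functional `K(t, f; A₀, A₁)`. -/
noncomputable def Kfun (A₀ A₁ : FunctionSpace Ω μ) (t : ℝ) (f : Ω →ₘ[μ] ℝ) : ℝ :=
  sInf {r | ∃ a₀ ∈ A₀.carrier, ∃ a₁ ∈ A₁.carrier,
    f = a₀ + a₁ ∧ r = A₀.norm a₀ + t * A₁.norm a₁}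

/-- The norm of the sum space `X₀ + X₁`, namely `K(1, ·)`. -/
noncomputable def sumNorm (A₀ A₁ : FunctionSpace Ω μ) (f : Ω →ₘ[μ] ℝ) : ℝ :=
  Kfun A₀ A₁ 1 f

/-- The functional `D(t, f; A₀, A₁)`, the analogue of the `K`-functional restricted to
disjointly supported decompositions. -/
noncomputable def Dfun (A₀ A₁ : FunctionSpace Ω μ) (t : ℝ) (f : Ω →ₘ[μ] ℝ) : ℝ :=
  sInf {r | ∃ a₀ ∈ A₀.carrier, ∃ a₁ ∈ A₁.carrier,
    f = a₀ + a₁ ∧ a₀ * a₁ = 0 ∧ r = A₀.norm a₀ + t * A₁.norm a₁}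

/-- `T : (A₀, A₁) → (A₀, A₁)` is a bounded linear operator: `T` is linear on `A₀ + A₁`
and its restriction to each `Aⱼ` is a bounded operator from `Aⱼ` into itself. -/
def IsBoundedCoupleOperator (A₀ A₁ : FunctionSpace Ω μ) (T : (Ω →ₘ[μ] ℝ) → (Ω →ₘ[μ] ℝ)) :
    Prop :=
  (∀ f ∈ sumSet A₀ A₁, ∀ g ∈ sumSet A₀ A₁, T (f + g) = T f + T g) ∧
  (∀ (c : ℝ), ∀ f ∈ sumSet A₀ A₁, T (c • f) = c • T f) ∧
  (∀ f ∈ A₀.carrier, T f ∈ A₀.carrier) ∧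
  (∀ f ∈ A₁.carrier, T f ∈ A₁.carrier) ∧
  (∃ C₀ : ℝ, ∀ f ∈ A₀.carrier, A₀.norm (T f) ≤ C₀ * A₀.norm f) ∧
  (∃ C₁ : ℝ, ∀ f ∈ A₁.carrier, A₁.norm (T f) ≤ C₁ * A₁.norm f)

/-- `‖T‖_{Aⱼ → Aⱼ} ≤ C` for `j = 0, 1`. -/
def CoupleOperatorNormLE (A₀ A₁ : FunctionSpace Ω μ) (T : (Ω →ₘ[μ] ℝ) → (Ω →ₘ[μ] ℝ))
    (C : ℝ) : Prop :=
  (∀ f ∈ A₀.carrier, A₀.norm (T f) ≤ C * A₀.norm f) ∧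
  (∀ f ∈ A₁.carrier, A₁.norm (T f) ≤ C * A₁.norm f)

/-- `T` is a positive operator on `A₀ + A₁`. -/
def IsPositiveOn (A₀ A₁ : FunctionSpace Ω μ) (T : (Ω →ₘ[μ] ℝ) → (Ω →ₘ[μ] ℝ)) : Prop :=
  ∀ h ∈ sumSet A₀ A₁, 0 ≤ h → 0 ≤ T h

/-- `(A₀, A₁)` is a Calderón couple. -/
def IsCalderonCouple (A₀ A₁ : FunctionSpace Ω μ) : Prop :=
  ∀ f ∈ sumSet A₀ A₁, ∀ g ∈ sumSet A₀ A₁,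
    (∀ t > 0, Kfun A₀ A₁ t g ≤ Kfun A₀ A₁ t f) →
    ∃ T, IsBoundedCoupleOperator A₀ A₁ T ∧ T f = g

/-- `(A₀, A₁)` is a `C`-Calderón couple. -/
def IsCCalderonCouple (A₀ A₁ : FunctionSpace Ω μ) (C : ℝ) : Prop :=
  ∀ f ∈ sumSet A₀ A₁, ∀ g ∈ sumSet A₀ A₁,
    (∀ t > 0, Kfun A₀ A₁ t g ≤ Kfun A₀ A₁ t f) →
    ∃ T, IsBoundedCoupleOperator A₀ A₁ T ∧ T f = g ∧ CoupleOperatorNormLE A₀ A₁ T C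

/-- `(A₀, A₁)` is a positive Calderón couple. -/
def IsPositiveCalderonCouple (A₀ A₁ : FunctionSpace Ω μ) : Prop :=
  ∀ f ∈ sumSet A₀ A₁, ∀ g ∈ sumSet A₀ A₁, 0 ≤ f → 0 ≤ g →
    (∀ t > 0, Kfun A₀ A₁ t g ≤ Kfun A₀ A₁ t f) →
    ∃ T, IsBoundedCoupleOperator A₀ A₁ T ∧ IsPositiveOn A₀ A₁ T ∧ T f = g

/-- `(A₀, A₁)` is a positive `C`-Calderón couple. -/
def IsPositiveCCalderonCouple (A₀ A₁ : FunctionSpace Ω μ) (C : ℝ) : Prop :=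
  ∀ f ∈ sumSet A₀ A₁, ∀ g ∈ sumSet A₀ A₁, 0 ≤ f → 0 ≤ g →
    (∀ t > 0, Kfun A₀ A₁ t g ≤ Kfun A₀ A₁ t f) →
    ∃ T, IsBoundedCoupleOperator A₀ A₁ T ∧ IsPositiveOn A₀ A₁ T ∧ T f = g ∧
      CoupleOperatorNormLE A₀ A₁ T C

/-- A set `S` of (classes of) measurable functions has the Least Upper Bound Property:
every nonempty subset of `S` bounded above by an element of `S` has a least upper bound
in `S` (for the a.e. pointwise order). -/
def HasLUBP (S : Set (Ω →ₘ[μ] ℝ)) : Prop :=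
  ∀ A ⊆ S, A.Nonempty → (∃ b ∈ S, ∀ a ∈ A, a ≤ b) →
    ∃ y ∈ S, (∀ a ∈ A, a ≤ y) ∧ ∀ z ∈ S, (∀ a ∈ A, a ≤ z) → y ≤ z

/-- For `1 < p < ∞` and a measurable `f`, one has
`f ∈ X₀^(p) + X₁^(p)` if and only if `|f|^p ∈ X₀ + X₁`. -/
-- Auxiliary lemmas ------------------------------------------------------------

private lemma rpow_superadd {x y : ℝ} (hx : 0 ≤ x) (hy : 0 ≤ y) {p : ℝ} (hp : 1 ≤ p) :
    x ^ p + y ^ p ≤ (x + y) ^ p := by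
  have h := NNReal.add_rpow_le_rpow_add (Real.toNNReal x) (Real.toNNReal y) hp
  rw [← NNReal.coe_le_coe] at h
  simpa [NNReal.coe_rpow, NNReal.coe_add, Real.coe_toNNReal x hx, Real.coe_toNNReal y hy] using h

private lemma rpow_sub_le {x y p : ℝ} (hy : 0 ≤ y) (hyx : y ≤ x) (hp : 1 ≤ p) :
    (x - y) ^ p ≤ x ^ p - y ^ p := by
  have h := rpow_superadd (sub_nonneg.2 hyx) hy hp
  rw [sub_add_cancel] at h
  linarith

private lemma abs_add_rpow_le {x y p : ℝ} (hp : 1 ≤ p) :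
    |x + y| ^ p ≤ 2 ^ p * |x| ^ p + 2 ^ p * |y| ^ p := by
  have hp0 : (0:ℝ) ≤ p := by linarith
  have h1 : |x + y| ≤ 2 * max |x| |y| := by
    have h := abs_add_le x y
    have hx := le_max_left |x| |y|
    have hy := le_max_right |x| |y|
    linarith
  have hmax0 : (0:ℝ) ≤ max |x| |y| := le_trans (abs_nonneg x) (le_max_left _ _)
  calc |x + y| ^ p ≤ (2 * max |x| |y|) ^ p := Real.rpow_le_rpow (abs_nonneg _) h1 hp0
    _ = 2 ^ p * (max |x| |y|) ^ p := Real.mul_rpow (by norm_num) hmax0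
    _ ≤ 2 ^ p * |x| ^ p + 2 ^ p * |y| ^ p := by
        rcases max_choice |x| |y| with h | h <;> rw [h]
        · have : 0 ≤ 2 ^ p * |y| ^ p := by positivity
          linarith
        · have : 0 ≤ 2 ^ p * |x| ^ p := by positivity
          linarith

private lemma measurable_realSign : Measurable Real.sign := by
  have : Real.sign = fun r : ℝ => if r < 0 then (-1 : ℝ) else if 0 < r then 1 else 0 := by
    funext r; rfl
  rw [this]
  exact Measurable.ite (measurableSet_lt measurable_id measurable_const) measurable_const
    (Measurable.ite (measurableSet_lt measurable_const measurable_id) measurable_const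
      measurable_const)

private lemma abs_realSign_le (x : ℝ) : |Real.sign x| ≤ 1 := by
  rcases Real.sign_apply_eq x with h | h | h <;> rw [h] <;> norm_num

private lemma abs_realSign_of_ne_zero {x : ℝ} (hx : x ≠ 0) : |Real.sign x| = 1 := by
  rcases Real.sign_apply_eq_of_ne_zero x hx with h | h <;> rw [h] <;> norm_num

private lemma realSign_mul_abs (x : ℝ) : Real.sign x * |x| = x := by
  rcases lt_trichotomy x 0 with h | h | h
  · rw [Real.sign_of_neg h, abs_of_neg h]; ring
  · simp [h]
  · rw [Real.sign_of_pos h, abs_of_pos h]; ring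

private lemma coeFn_absRpow (p : ℝ) (f : Ω →ₘ[μ] ℝ) :
    ⇑(absRpow p f) =ᵐ[μ] fun ω => |f ω| ^ p :=
  AEEqFun.coeFn_mk _ _

theorem mem_sumSet_pConv_iff
    (X₀ X₁ : BanachFunctionLattice Ω μ) (p : ℝ) (hp : 1 < p) (f : Ω →ₘ[μ] ℝ) :
    f ∈ sumSet (pConv X₀ p) (pConv X₁ p) ↔
      absRpow p f ∈ sumSet X₀.toFunctionSpace X₁.toFunctionSpace := by
  have hp0 : (0:ℝ) < p := by linarith
  have hp0' : p ≠ 0 := ne_of_gt hp0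
  have hp0n : (0:ℝ) ≤ p := le_of_lt hp0
  have hip : (0:ℝ) ≤ 1 / p := by positivity
  have hmeas : Measurable fun x : ℝ => |x| ^ p := by measurability
  have hmeas' : Measurable fun x : ℝ => x ^ (1 / p) := by measurability
  constructor
  · rintro ⟨a₀, h₀, a₁, h₁, rfl⟩
    have h₀' : absRpow p a₀ ∈ X₀.carrier := h₀
    have h₁' : absRpow p a₁ ∈ X₁.carrier := h₁
    set F : Ω →ₘ[μ] ℝ := a₀ + a₁ with hF
    have hm : MeasureTheory.AEStronglyMeasurable
        (fun ω => min (|F ω| ^ p) (2 ^ p * |a₀ ω| ^ p)) μ :=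
      ((hmeas.comp_aemeasurable F.aemeasurable).min
        ((hmeas.comp_aemeasurable a₀.aemeasurable).const_mul _)).aestronglyMeasurable
    set b₀ : Ω →ₘ[μ] ℝ := AEEqFun.mk _ hm with hb₀
    refine ⟨b₀, ?_, absRpow p F - b₀, ?_, by abel⟩
    · -- b₀ ∈ X₀
      refine X₀.ideal_mem ((2 ^ p : ℝ) • absRpow p a₀) (X₀.smul_mem _ h₀') b₀ ?_
      rw [← AEEqFun.coeFn_le]
      filter_upwards [AEEqFun.coeFn_abs b₀, AEEqFun.coeFn_abs ((2 ^ p : ℝ) • absRpow p a₀),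
        AEEqFun.coeFn_mk _ hm, AEEqFun.coeFn_smul (2 ^ p : ℝ) (absRpow p a₀),
        coeFn_absRpow p a₀] with ω e1 e2 e3 e4 e5
      have hx : (0:ℝ) ≤ |F ω| ^ p := Real.rpow_nonneg (abs_nonneg _) p
      have hy : (0:ℝ) ≤ 2 ^ p * |a₀ ω| ^ p := by positivity
      rw [e1, e3, e2, e4]
      simp only [Pi.smul_apply, smul_eq_mul, e5]
      rw [abs_of_nonneg (le_min hx hy), abs_of_nonneg hy]
      exact min_le_right _ _
    · -- b₁ ∈ X₁
      refine X₁.ideal_mem ((2 ^ p : ℝ) • absRpow p a₁) (X₁.smul_mem _ h₁') _ ?_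
      rw [← AEEqFun.coeFn_le]
      filter_upwards [AEEqFun.coeFn_abs (absRpow p F - b₀),
        AEEqFun.coeFn_abs ((2 ^ p : ℝ) • absRpow p a₁),
        AEEqFun.coeFn_sub (absRpow p F) b₀, AEEqFun.coeFn_mk _ hm,
        AEEqFun.coeFn_smul (2 ^ p : ℝ) (absRpow p a₁),
        coeFn_absRpow p a₁, coeFn_absRpow p F, AEEqFun.coeFn_add a₀ a₁]
        with ω e1 e2 e3 e4 e5 e6 e7 e8
      have hFeq : F ω = a₀ ω + a₁ ω := e8
      have hy1 : (0:ℝ) ≤ 2 ^ p * |a₁ ω| ^ p := by positivity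
      rw [e1, e3]
      simp only [Pi.sub_apply]
      rw [e7, hb₀, e4, e2, e5]
      simp only [Pi.smul_apply, smul_eq_mul, e6]
      rw [abs_of_nonneg hy1]
      have hkey : |F ω| ^ p ≤ 2 ^ p * |a₀ ω| ^ p + 2 ^ p * |a₁ ω| ^ p := by
        rw [hFeq]; exact abs_add_rpow_le (le_of_lt hp)
      rcases le_total (|F ω| ^ p) (2 ^ p * |a₀ ω| ^ p) with h | h
      · rw [min_eq_left h, sub_self, abs_zero]; exact hy1
      · rw [min_eq_right h, abs_of_nonneg (by linarith)]
        linarith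
  · rintro ⟨b₀, h₀, b₁, h₁, hsum⟩
    have h₀' : b₀ ∈ X₀.carrier := h₀
    have h₁' : b₁ ∈ X₁.carrier := h₁
    have hae : ∀ᵐ ω ∂μ, |f ω| ^ p = b₀ ω + b₁ ω := by
      have : ⇑(absRpow p f) =ᵐ[μ] ⇑(b₀ + b₁) := by rw [hsum]
      filter_upwards [this, coeFn_absRpow p f, AEEqFun.coeFn_add b₀ b₁] with ω e1 e2 e3
      rw [← e2, e1, e3]; rfl
    set g₀ : Ω → ℝ := fun ω => Real.sign (f ω) * (min (|f ω| ^ p) |b₀ ω|) ^ (1 / p) with hg₀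
    have hg : MeasureTheory.AEStronglyMeasurable g₀ μ :=
      ((measurable_realSign.comp_aemeasurable f.aemeasurable).mul
        (hmeas'.comp_aemeasurable ((hmeas.comp_aemeasurable f.aemeasurable).min
          (measurable_abs.comp_aemeasurable b₀.aemeasurable)))).aestronglyMeasurable
    set a₀ : Ω →ₘ[μ] ℝ := AEEqFun.mk g₀ hg with ha₀
    refine ⟨a₀, ?_, f - a₀, ?_, by abel⟩
    · -- a₀ ∈ pConv X₀ p
      show absRpow p a₀ ∈ X₀.carrier
      refine X₀.ideal_mem b₀ h₀' _ ?_
      rw [← AEEqFun.coeFn_le]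
      filter_upwards [AEEqFun.coeFn_abs (absRpow p a₀), AEEqFun.coeFn_abs b₀,
        coeFn_absRpow p a₀, AEEqFun.coeFn_mk g₀ hg] with ω e1 e2 e3 e4
      rw [e1, e2, e3, e4]
      set M : ℝ := min (|f ω| ^ p) |b₀ ω| with hM
      have hM0 : (0:ℝ) ≤ M := le_min (Real.rpow_nonneg (abs_nonneg _) p) (abs_nonneg _)
      have h1 : |g₀ ω| ≤ M ^ (1 / p) := by
        rw [hg₀]
        simp only [abs_mul]
        rw [abs_of_nonneg (Real.rpow_nonneg hM0 _)]
        exact mul_le_of_le_one_left (Real.rpow_nonneg hM0 _) (abs_realSign_le _)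
      have h2 : |g₀ ω| ^ p ≤ (M ^ (1 / p)) ^ p :=
        Real.rpow_le_rpow (abs_nonneg _) h1 hp0n
      rw [abs_of_nonneg (Real.rpow_nonneg (abs_nonneg _) p)]
      calc |g₀ ω| ^ p ≤ (M ^ (1 / p)) ^ p := h2
        _ = M := by rw [one_div, Real.rpow_inv_rpow hM0 hp0']
        _ ≤ |b₀ ω| := min_le_right _ _
    · -- a₁ ∈ pConv X₁ p
      show absRpow p (f - a₀) ∈ X₁.carrier
      refine X₁.ideal_mem b₁ h₁' _ ?_
      rw [← AEEqFun.coeFn_le]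
      filter_upwards [AEEqFun.coeFn_abs (absRpow p (f - a₀)), AEEqFun.coeFn_abs b₁,
        coeFn_absRpow p (f - a₀), AEEqFun.coeFn_sub f a₀, AEEqFun.coeFn_mk g₀ hg, hae]
        with ω e1 e2 e3 e4 e5 E
      rw [e1, e2, e3, abs_of_nonneg (Real.rpow_nonneg (abs_nonneg _) p), e4]
      simp only [Pi.sub_apply, ha₀, e5]
      set M : ℝ := min (|f ω| ^ p) |b₀ ω| with hM
      have hM0 : (0:ℝ) ≤ M := le_min (Real.rpow_nonneg (abs_nonneg _) p) (abs_nonneg _)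
      have hMle : M ≤ |f ω| ^ p := min_le_left _ _
      by_cases hfz : f ω = 0
      · have hfp : |f ω| ^ p = 0 := by rw [hfz, abs_zero, Real.zero_rpow hp0']
        have hMz : M = 0 := le_antisymm (hfp ▸ hMle) hM0
        have : g₀ ω = 0 := by
          rw [hg₀]; simp only
          rw [← hM, hMz, Real.zero_rpow (by positivity : 1 / p ≠ 0), mul_zero]
        rw [hfz, this, sub_zero, abs_zero, Real.zero_rpow hp0']
        exact abs_nonneg _
      · have hsign : |Real.sign (f ω)| = 1 := abs_realSign_of_ne_zero hfz
        have hr0 : (0:ℝ) ≤ M ^ (1 / p) := Real.rpow_nonneg hM0 _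
        have hrle : M ^ (1 / p) ≤ |f ω| := by
          have h := Real.rpow_le_rpow hM0 hMle hip
          rw [one_div] at h ⊢
          rwa [Real.rpow_rpow_inv (abs_nonneg _) hp0'] at h
        have hdiff : f ω - g₀ ω = Real.sign (f ω) * (|f ω| - M ^ (1 / p)) := by
          rw [hg₀]; simp only
          rw [← hM, mul_sub, realSign_mul_abs]
        have habs : |f ω - g₀ ω| = |f ω| - M ^ (1 / p) := by
          rw [hdiff, abs_mul, hsign, one_mul, abs_of_nonneg (by linarith)]
        rw [habs]
        have hMval : (M ^ (1 / p)) ^ p = M := by rw [one_div, Real.rpow_inv_rpow hM0 hp0']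
        have h3 : (|f ω| - M ^ (1 / p)) ^ p ≤ |f ω| ^ p - M := by
          have := rpow_sub_le hr0 hrle (le_of_lt hp)
          rwa [hMval] at this
        have h4 : |f ω| ^ p - M ≤ |b₁ ω| := by
          have hb : |f ω| ^ p ≤ |b₀ ω| + |b₁ ω| := by
            rw [E]; exact add_le_add (le_abs_self _) (le_abs_self _)
          rcases le_total (|f ω| ^ p) |b₀ ω| with h | h
          · rw [hM, min_eq_left h]; simp [abs_nonneg]
          · rw [hM, min_eq_right h]; linarith
        linarith
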